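/- Let B ∈ (ℝ ∪ {−∞})^{n×n} satisfy Tr(B) ≤ 𝟙, let p ∈ (ℝ ∪ {−∞})ⁿ be a nonzero vector, and let q ∈ ℝⁿ be a regular vector. Set θ = (q⁻ B* p)^{1/2}. Then the minimum of x⁻ p ⊕ q⁻ x over all regular vectors x ∈ ℝⁿ satisfying B x ≤ x equals θ, and a regular vector x with B x ≤ x attains this minimum if and only if x = B* u for some vector u with θ⁻¹ p ≤ u ≤ θ (q⁻ B*)⁻, where θ⁻¹ = −θ. -/

import Mathlib

open Finset

noncomputable section

namespace MaxPlus

/-- Max-plus multiplicative inverse: `-a` for real `a`, `⊥` for `⊥`. -/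
def tinv (a : WithBot ℝ) : WithBot ℝ := WithBot.map (fun r => -r) a

/-- Max-plus rational power `a^(1/k) = a / k`. -/
def trt (a : WithBot ℝ) (k : ℕ) : WithBot ℝ := WithBot.map (fun r => r / (k : ℝ)) a

/-- A vector is regular if it has no `⊥` (= -∞) entries. -/
def Reg {n : ℕ} (x : Fin n → WithBot ℝ) : Prop := ∀ i, x i ≠ ⊥

/-- `cdot q x = q⁻ x`, the max-plus product of the conjugate row vector `q⁻` with `x`. -/
def cdot {n : ℕ} (q x : Fin n → WithBot ℝ) : WithBot ℝ :=
  Finset.univ.sup fun i => tinv (q i) + x i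

/-- Max-plus matrix-vector product. -/
def mulVec {m n : ℕ} (A : Matrix (Fin m) (Fin n) (WithBot ℝ)) (x : Fin n → WithBot ℝ) :
    Fin m → WithBot ℝ := fun i => Finset.univ.sup fun j => A i j + x j

/-- Max-plus matrix product. -/
def tmul {l m n : ℕ} (A : Matrix (Fin l) (Fin m) (WithBot ℝ))
    (B : Matrix (Fin m) (Fin n) (WithBot ℝ)) : Matrix (Fin l) (Fin n) (WithBot ℝ) :=
  fun i j => Finset.univ.sup fun k => A i k + B k j

/-- Multiplicative conjugate transpose of a matrix. -/
def conjM {m n : ℕ} (A : Matrix (Fin m) (Fin n) (WithBot ℝ)) :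
    Matrix (Fin n) (Fin m) (WithBot ℝ) := fun i j => tinv (A j i)

/-- Max-plus identity matrix. -/
def tId {n : ℕ} : Matrix (Fin n) (Fin n) (WithBot ℝ) := fun i j => if i = j then 0 else ⊥

/-- Max-plus matrix power. -/
def tpow {n : ℕ} (A : Matrix (Fin n) (Fin n) (WithBot ℝ)) : ℕ → Matrix (Fin n) (Fin n) (WithBot ℝ)
  | 0 => tId
  | k + 1 => tmul A (tpow A k)

/-- Max-plus trace. -/
def ttr {n : ℕ} (A : Matrix (Fin n) (Fin n) (WithBot ℝ)) : WithBot ℝ :=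
  Finset.univ.sup fun i => A i i

/-- `Tr(A) = tr A ⊕ tr A² ⊕ ⋯ ⊕ tr Aⁿ`. -/
def TrOp {n : ℕ} (A : Matrix (Fin n) (Fin n) (WithBot ℝ)) : WithBot ℝ :=
  (Finset.Icc 1 n).sup fun m => ttr (tpow A m)

/-- Kleene star `A* = I ⊕ A ⊕ ⋯ ⊕ A^(n-1)`. -/
def kstar {n : ℕ} (A : Matrix (Fin n) (Fin n) (WithBot ℝ)) : Matrix (Fin n) (Fin n) (WithBot ℝ) :=
  fun i j => (Finset.range n).sup fun k => tpow A k i j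

/-- Max-plus spectral radius `λ = ⊕_{m=1}^n (tr A^m)^(1/m)`. -/
def specRad {n : ℕ} (A : Matrix (Fin n) (Fin n) (WithBot ℝ)) : WithBot ℝ :=
  (Finset.Icc 1 n).sup fun m => trt (ttr (tpow A m)) m

/-- `prodAB A B [i₁, …, i_k] = A B^{i₁} A B^{i₂} ⋯ A B^{i_k}`. -/
def prodAB {n : ℕ} (A B : Matrix (Fin n) (Fin n) (WithBot ℝ)) :
    List ℕ → Matrix (Fin n) (Fin n) (WithBot ℝ)
  | [] => tId
  | i :: t => tmul (tmul A (tpow B i)) (prodAB A B t)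

/-- The all-ones (all-`𝟙 = 0`) vector. -/
def onesV (n : ℕ) : Fin n → WithBot ℝ := fun _ => 0

end MaxPlus

open MaxPlus

/- ### generic sup/add lemmas -/
section helpers

lemma wb_add_sup {ι : Type*} (s : Finset ι) (hs : s.Nonempty) (a : WithBot ℝ)
    (f : ι → WithBot ℝ) : a + s.sup f = s.sup fun i => a + f i := by
  obtain ⟨i0, hi0, he⟩ := Finset.exists_mem_eq_sup s hs f
  refine le_antisymm ?_ ?_
  · rw [he]; exact Finset.le_sup (f := fun i => a + f i) hi0
  · refine Finset.sup_le fun i hi => ?_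
    exact add_le_add_right (Finset.le_sup (f := f) hi) a

lemma wb_sup_add {ι : Type*} (s : Finset ι) (hs : s.Nonempty) (a : WithBot ℝ)
    (f : ι → WithBot ℝ) : s.sup f + a = s.sup fun i => f i + a := by
  rw [add_comm, wb_add_sup s hs]; simp [add_comm]

lemma tinv_coe (r : ℝ) : tinv (r : WithBot ℝ) = ((-r : ℝ) : WithBot ℝ) := rfl

lemma tinv_ne_bot {a : WithBot ℝ} (h : a ≠ ⊥) : tinv a ≠ ⊥ := by
  cases a with
  | bot => simp at h
  | coe r => simp [tinv_coe]

end helpers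

section paths

variable {n : ℕ} (B : Matrix (Fin n) (Fin n) (WithBot ℝ))

/-- weight of the walk visiting the vertices of the list in order -/
def lw : List (Fin n) → WithBot ℝ
  | [] => 0
  | [_] => 0
  | u :: v :: t => B u v + lw (v :: t)

@[simp] lemma lw_nil : lw B [] = 0 := rfl
@[simp] lemma lw_single (u : Fin n) : lw B [u] = 0 := rfl
@[simp] lemma lw_cons_cons (u v : Fin n) (t : List (Fin n)) :
    lw B (u :: v :: t) = B u v + lw B (v :: t) := rfl

lemma lw_append_cons (a : Fin n) (l2 : List (Fin n)) :
    ∀ l1 : List (Fin n), lw B (l1 ++ a :: l2) = lw B (l1 ++ [a]) + lw B (a :: l2) := by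
  intro l1
  induction l1 with
  | nil => simp
  | cons u l1 ih =>
    cases l1 with
    | nil => simp [add_assoc]
    | cons w l1' =>
      simp only [List.cons_append, lw_cons_cons] at *
      rw [ih, add_assoc]

lemma lw_le_tpow : ∀ (L : List (Fin n)) (u v : Fin n),
    lw B (u :: L ++ [v]) ≤ tpow B (L.length + 1) u v := by
  intro L
  induction L with
  | nil =>
    intro u v
    have : lw B (u :: [] ++ [v]) = B u v := by simp
    rw [this]
    show B u v ≤ tmul B tId u v
    have : B u v = B u v + tId v v := by simp [tId]
    rw [this]
    exact Finset.le_sup (f := fun k => B u k + tId k v) (Finset.mem_univ v)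
  | cons w L ih =>
    intro u v
    have h1 : lw B (u :: (w :: L) ++ [v]) = B u w + lw B (w :: L ++ [v]) := by simp
    rw [h1]
    calc B u w + lw B (w :: L ++ [v]) ≤ B u w + tpow B (L.length + 1) w v :=
          add_le_add_right (ih w v) _
      _ ≤ tpow B ((w :: L).length + 1) u v := by
          show _ ≤ tmul B (tpow B (L.length + 1)) u v
          exact Finset.le_sup (f := fun k => B u k + tpow B (L.length + 1) k v)
            (Finset.mem_univ w)

lemma tpow_le_sup_lw : ∀ (l : ℕ) (u v : Fin n),
    tpow B (l + 1) u v ≤ (Finset.univ : Finset (Fin l → Fin n)).sup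
      fun g => lw B (u :: List.ofFn g ++ [v]) := by
  intro l
  induction l with
  | zero =>
    intro u v
    show tmul B tId u v ≤ _
    refine Finset.sup_le fun k _ => ?_
    by_cases hk : k = v
    · subst hk
      have h2 : B u k + tId k k = lw B (u :: List.ofFn (Fin.elim0 : Fin 0 → Fin n) ++ [k]) := by
        simp [tId]
      rw [h2]
      exact Finset.le_sup (f := fun g : Fin 0 → Fin n => lw B (u :: List.ofFn g ++ [k])) (Finset.mem_univ _)
    · simp [tId, hk]
  | succ l ih =>
    intro u v
    show tmul B (tpow B (l+1)) u v ≤ _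
    refine Finset.sup_le fun k _ => ?_
    have hne : (Finset.univ : Finset (Fin l → Fin n)).Nonempty :=
      ⟨fun _ => u, Finset.mem_univ _⟩
    calc B u k + tpow B (l+1) k v
        ≤ B u k + (Finset.univ : Finset (Fin l → Fin n)).sup
            (fun g => lw B (k :: List.ofFn g ++ [v])) := add_le_add_right (ih k v) _
      _ = (Finset.univ : Finset (Fin l → Fin n)).sup
            (fun g => B u k + lw B (k :: List.ofFn g ++ [v])) := wb_add_sup _ hne _ _
      _ ≤ _ := by
          refine Finset.sup_le fun g _ => ?_
          have h1 : B u k + lw B (k :: List.ofFn g ++ [v])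
              = lw B (u :: List.ofFn (Fin.cons k g) ++ [v]) := by
            rw [List.ofFn_succ]
            simp [Fin.cons_succ, Function.comp]
          rw [h1]
          exact Finset.le_sup (f := fun g : Fin (l+1) → Fin n => lw B (u :: List.ofFn g ++ [v])) (Finset.mem_univ _)

end paths

section carre

variable {n : ℕ} (B : Matrix (Fin n) (Fin n) (WithBot ℝ))

lemma sublist_pair_split {α : Type*} (a : α) :
    ∀ {W : List α}, List.Sublist [a, a] W → ∃ l1 l2 l3, W = l1 ++ a :: l2 ++ a :: l3 := by
  intro W h
  induction W with
  | nil => exact absurd (List.sublist_nil.mp h) (by simp)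
  | cons b W ih =>
    cases h with
    | cons _ h' =>
      obtain ⟨l1, l2, l3, rfl⟩ := ih h'
      exact ⟨b :: l1, l2, l3, rfl⟩
    | cons_cons _ h' =>
      have ha : a ∈ W := List.singleton_sublist.mp h'
      obtain ⟨s, t, rfl⟩ := List.append_of_mem ha
      exact ⟨[], s, t, rfl⟩

lemma kstar_diag_nonneg (u : Fin n) : (0 : WithBot ℝ) ≤ kstar B u u := by
  have h0 : tpow B 0 u u = 0 := by simp [tpow, tId]
  rw [← h0]
  exact Finset.le_sup (f := fun k => tpow B k u u) (Finset.mem_range.mpr u.pos)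

lemma cycle_wt_nonpos (hB : TrOp B ≤ 0) (a : Fin n) (C : List (Fin n))
    (hC : C.length + 1 ≤ n) : lw B (a :: C ++ [a]) ≤ 0 := by
  calc lw B (a :: C ++ [a]) ≤ tpow B (C.length + 1) a a := lw_le_tpow B C a a
    _ ≤ ttr (tpow B (C.length + 1)) :=
        Finset.le_sup (f := fun i => tpow B (C.length + 1) i i) (Finset.mem_univ a)
    _ ≤ TrOp B := Finset.le_sup (f := fun m => ttr (tpow B m))
        (Finset.mem_Icc.mpr ⟨Nat.succ_le_succ (Nat.zero_le _), hC⟩)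
    _ ≤ 0 := hB

lemma head?_append_cons {α : Type*} (l1 : List α) (a : α) (x y : List α) :
    (l1 ++ a :: x).head? = (l1 ++ a :: y).head? := by
  cases l1 <;> simp

lemma lw_le_kstar (hB : TrOp B ≤ 0) :
    ∀ (N : ℕ) (V : List (Fin n)) (u v : Fin n), V.length ≤ N →
      V.head? = some u → V.getLast? = some v → lw B V ≤ kstar B u v := by
  intro N
  induction N using Nat.strong_induction_on with
  | _ N IH =>
  intro V u v hlen hhead hlast
  cases V with
  | nil => simp at hhead
  | cons w T =>
  have hw : u = w := by simpa using hhead.symm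
  subst hw
  cases T with
  | nil =>
    have hv : u = v := by simpa using hlast
    subst hv
    simpa using kstar_diag_nonneg B u
  | cons b T' =>
    -- V = u :: L ++ [v] with L = (b :: T').dropLast
    set T : List (Fin n) := b :: T' with hT
    have hTne : T ≠ [] := by simp [hT]
    have hsplit : T = T.dropLast ++ [T.getLast hTne] := (List.dropLast_append_getLast hTne).symm
    have hvlast : T.getLast hTne = v := by
      have : (u :: T).getLast? = T.getLast? := List.getLast?_append_of_ne_nil [u] hTne
      rw [this, List.getLast?_eq_getLast hTne] at hlast
      exact Option.some_injective _ hlast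
    set L : List (Fin n) := T.dropLast with hL
    have hV : u :: T = u :: L ++ [v] := by
      rw [hL]; nth_rewrite 1 [hsplit]; rw [hvlast]; simp; exact hL
    by_cases hsmall : L.length + 1 < n
    · rw [hV]
      calc lw B (u :: L ++ [v]) ≤ tpow B (L.length + 1) u v := lw_le_tpow B L u v
        _ ≤ kstar B u v := Finset.le_sup (f := fun k => tpow B k u v)
            (Finset.mem_range.mpr hsmall)
    · -- long walk: find a repeated vertex among the first n+1 vertices
      have hVlen : n + 1 ≤ (u :: T).length := by
        have h1 : L.length = T.length - 1 := by rw [hL]; simp [List.length_dropLast]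
        have h2 : T.length = T'.length + 1 := by rw [hT]; simp
        simp only [List.length_cons]
        omega
      set W : List (Fin n) := (u :: T).take (n + 1) with hW
      have hWlen : W.length = n + 1 := by
        rw [hW, List.length_take]; omega
      have hWnd : ¬ W.Nodup := by
        intro hnd
        have := hnd.length_le_card
        simp [hWlen] at this
      obtain ⟨a, hdup⟩ := List.exists_duplicate_iff_not_nodup.mpr hWnd
      obtain ⟨l1, l2, l3, hWeq⟩ := sublist_pair_split a (List.duplicate_iff_sublist.mp hdup)
      set D : List (Fin n) := (u :: T).drop (n + 1) with hD
      have hVeq : u :: T = l1 ++ a :: l2 ++ a :: (l3 ++ D) := by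
        have : u :: T = W ++ D := by rw [hW, hD, List.take_append_drop]
        rw [this, hWeq]; simp
      have hl2 : l2.length + 1 ≤ n := by
        have := hWlen
        rw [hWeq] at this
        simp only [List.length_append, List.length_cons] at this
        omega
      -- weight inequality: remove the cycle a :: l2 ++ [a]
      set V' : List (Fin n) := l1 ++ a :: (l3 ++ D) with hV'
      have key : ∀ Z : List (Fin n),
          lw B (l1 ++ a :: (l2 ++ a :: Z)) ≤ lw B (l1 ++ a :: Z) := by
        intro Z
        rw [lw_append_cons B a (l2 ++ a :: Z) l1, lw_append_cons B a Z l1]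
        have h2 : lw B (a :: (l2 ++ a :: Z)) = lw B (a :: (l2 ++ [a])) + lw B (a :: Z) := by
          have h := lw_append_cons B a Z (a :: l2)
          simpa only [List.cons_append] using h
        rw [h2]
        have hcyc : lw B (a :: (l2 ++ [a])) ≤ 0 := by
          have h := cycle_wt_nonpos B hB a l2 hl2
          simpa only [List.cons_append] using h
        calc lw B (l1 ++ [a]) + (lw B (a :: (l2 ++ [a])) + lw B (a :: Z))
            ≤ lw B (l1 ++ [a]) + (0 + lw B (a :: Z)) :=
              add_le_add_right (add_le_add_left hcyc _) _
          _ = lw B (l1 ++ [a]) + lw B (a :: Z) := by rw [zero_add]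
      have hwt : lw B (u :: T) ≤ lw B V' := by
        rw [hVeq, hV']
        have e1 : l1 ++ a :: l2 ++ a :: (l3 ++ D) = l1 ++ a :: (l2 ++ a :: (l3 ++ D)) := by simp
        rw [e1]
        exact key (l3 ++ D)
      have hV'len : V'.length < (u :: T).length := by
        rw [hV', hVeq]; simp
      have hV'head : V'.head? = some u := by
        rw [hV']
        rw [head?_append_cons l1 a (l3 ++ D) (l2 ++ a :: (l3 ++ D))]
        have : l1 ++ a :: (l2 ++ a :: (l3 ++ D)) = u :: T := by rw [hVeq]; simp
        rw [this]; rfl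
      have hV'last : V'.getLast? = some v := by
        have hlast' : (u :: T).getLast? = some v := hlast
        rw [hVeq] at hlast'
        rw [hV']
        rcases List.eq_nil_or_concat (l3 ++ D) with hnil | ⟨ys, y, hys⟩
        · rw [hnil] at hlast' ⊢
          have h3 : (l1 ++ a :: l2 ++ a :: ([] : List (Fin n))).getLast? = some a := by
            have : l1 ++ a :: l2 ++ a :: ([] : List (Fin n))
                = (l1 ++ a :: l2) ++ [a] := by simp
            rw [this, List.getLast?_concat]
          rw [h3] at hlast'
          have h4 : (l1 ++ [a]).getLast? = some a := List.getLast?_concat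
          rw [h4]; exact hlast'
        · rw [List.concat_eq_append] at hys
          rw [hys] at hlast' ⊢
          have h3 : (l1 ++ a :: l2 ++ a :: (ys ++ [y])).getLast? = some y := by
            have : l1 ++ a :: l2 ++ a :: (ys ++ [y])
                = (l1 ++ a :: l2 ++ a :: ys) ++ [y] := by simp
            rw [this, List.getLast?_concat]
          rw [h3] at hlast'
          have h4 : (l1 ++ a :: (ys ++ [y])).getLast? = some y := by
            have : l1 ++ a :: (ys ++ [y]) = (l1 ++ a :: ys) ++ [y] := by simp
            rw [this, List.getLast?_concat]
          rw [h4]; exact hlast'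
      have hrec : lw B V' ≤ kstar B u v := by
        have hlt : V'.length < N := lt_of_lt_of_le hV'len hlen
        exact IH V'.length hlt V' u v le_rfl hV'head hV'last
      exact le_trans hwt hrec

lemma tpow_succ_le_kstar (hB : TrOp B ≤ 0) (l : ℕ) (u v : Fin n) :
    tpow B (l + 1) u v ≤ kstar B u v := by
  refine le_trans (tpow_le_sup_lw B l u v) (Finset.sup_le fun g _ => ?_)
  refine lw_le_kstar B hB _ _ u v le_rfl (by rfl) ?_
  show (u :: (List.ofFn g ++ [v])).getLast? = some v
  have : u :: (List.ofFn g ++ [v]) = (u :: List.ofFn g) ++ [v] := by simp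
  rw [this, List.getLast?_concat]

lemma tpow_le_kstar (hB : TrOp B ≤ 0) (l : ℕ) (u v : Fin n) :
    tpow B l u v ≤ kstar B u v := by
  cases l with
  | zero => exact Finset.le_sup (f := fun k => tpow B k u v) (Finset.mem_range.mpr u.pos)
  | succ l => exact tpow_succ_le_kstar B hB l u v

lemma tmul_kstar_le (hB : TrOp B ≤ 0) (i j : Fin n) :
    tmul B (kstar B) i j ≤ kstar B i j := by
  refine Finset.sup_le fun k _ => ?_
  have hne : (Finset.range n).Nonempty := ⟨0, Finset.mem_range.mpr k.pos⟩
  calc B i k + kstar B k j = (Finset.range n).sup fun m => B i k + tpow B m k j :=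
        wb_add_sup _ hne _ _
    _ ≤ kstar B i j := by
        refine Finset.sup_le fun m _ => ?_
        calc B i k + tpow B m k j ≤ tmul B (tpow B m) i j :=
              Finset.le_sup (f := fun k' => B i k' + tpow B m k' j) (Finset.mem_univ k)
          _ = tpow B (m + 1) i j := rfl
          _ ≤ kstar B i j := tpow_succ_le_kstar B hB m i j

end carre

section vec

variable {n : ℕ}

lemma univ_ne (hn : 0 < n) : (Finset.univ : Finset (Fin n)).Nonempty :=
  ⟨⟨0, hn⟩, Finset.mem_univ _⟩

lemma mulVec_mono {A : Matrix (Fin n) (Fin n) (WithBot ℝ)} {x y : Fin n → WithBot ℝ}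
    (h : ∀ j, x j ≤ y j) (i : Fin n) : mulVec A x i ≤ mulVec A y i :=
  Finset.sup_le fun j _ => le_trans (add_le_add_right (h j) _)
    (Finset.le_sup (f := fun j => A i j + y j) (Finset.mem_univ j))

lemma cdot_mono {q : Fin n → WithBot ℝ} {x y : Fin n → WithBot ℝ}
    (h : ∀ j, x j ≤ y j) : cdot q x ≤ cdot q y :=
  Finset.sup_le fun j _ => le_trans (add_le_add_right (h j) _)
    (Finset.le_sup (f := fun j => tinv (q j) + y j) (Finset.mem_univ j))

lemma mulVec_tmul (hn : 0 < n) (A C : Matrix (Fin n) (Fin n) (WithBot ℝ))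
    (x : Fin n → WithBot ℝ) (i : Fin n) :
    mulVec (tmul A C) x i = mulVec A (mulVec C x) i := by
  show (Finset.univ.sup fun j => (Finset.univ.sup fun k => A i k + C k j) + x j)
      = Finset.univ.sup fun k => A i k + Finset.univ.sup fun j => C k j + x j
  calc (Finset.univ.sup fun j => (Finset.univ.sup fun k => A i k + C k j) + x j)
      = Finset.univ.sup fun j => Finset.univ.sup fun k => A i k + C k j + x j := by
        refine Finset.sup_congr rfl fun j _ => ?_
        rw [wb_sup_add _ (univ_ne hn)]
    _ = Finset.univ.sup fun k => Finset.univ.sup fun j => A i k + C k j + x j :=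
        Finset.sup_comm _ _ _
    _ = Finset.univ.sup fun k => A i k + Finset.univ.sup fun j => C k j + x j := by
        refine Finset.sup_congr rfl fun k _ => ?_
        rw [wb_add_sup _ (univ_ne hn)]
        simp_rw [add_assoc]

lemma cdot_mulVec (hn : 0 < n) (q : Fin n → WithBot ℝ) (A : Matrix (Fin n) (Fin n) (WithBot ℝ))
    (x : Fin n → WithBot ℝ) :
    cdot q (mulVec A x)
      = Finset.univ.sup fun j => (Finset.univ.sup fun i => tinv (q i) + A i j) + x j := by
  show (Finset.univ.sup fun i => tinv (q i) + Finset.univ.sup fun j => A i j + x j) = _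
  calc (Finset.univ.sup fun i => tinv (q i) + Finset.univ.sup fun j => A i j + x j)
      = Finset.univ.sup fun i => Finset.univ.sup fun j => tinv (q i) + A i j + x j := by
        refine Finset.sup_congr rfl fun i _ => ?_
        rw [wb_add_sup _ (univ_ne hn)]
        simp_rw [add_assoc]
    _ = Finset.univ.sup fun j => Finset.univ.sup fun i => tinv (q i) + A i j + x j :=
        Finset.sup_comm _ _ _
    _ = _ := by
        refine Finset.sup_congr rfl fun j _ => ?_
        rw [wb_sup_add _ (univ_ne hn)]

lemma mulVec_add_const (hn : 0 < n) (A : Matrix (Fin n) (Fin n) (WithBot ℝ))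
    (x : Fin n → WithBot ℝ) (c : WithBot ℝ) (i : Fin n) :
    mulVec A (fun j => x j + c) i = mulVec A x i + c := by
  show (Finset.univ.sup fun j => A i j + (x j + c)) = (Finset.univ.sup fun j => A i j + x j) + c
  rw [wb_sup_add _ (univ_ne hn)]
  simp_rw [add_assoc]

lemma cdot_add_const (hn : 0 < n) (q : Fin n → WithBot ℝ)
    (x : Fin n → WithBot ℝ) (c : WithBot ℝ) :
    cdot q (fun j => x j + c) = cdot q x + c := by
  show (Finset.univ.sup fun j => tinv (q j) + (x j + c))
      = (Finset.univ.sup fun j => tinv (q j) + x j) + c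
  rw [wb_sup_add _ (univ_ne hn)]
  simp_rw [add_assoc]

variable (B : Matrix (Fin n) (Fin n) (WithBot ℝ))

lemma le_mulVec_kstar (x : Fin n → WithBot ℝ) (j : Fin n) :
    x j ≤ mulVec (kstar B) x j := by
  calc x j = 0 + x j := (zero_add _).symm
    _ ≤ kstar B j j + x j := add_le_add_left (kstar_diag_nonneg B j) _
    _ ≤ mulVec (kstar B) x j :=
        Finset.le_sup (f := fun k => kstar B j k + x k) (Finset.mem_univ j)

lemma mulVec_tpow_le {x : Fin n → WithBot ℝ} (hx : ∀ i, mulVec B x i ≤ x i) :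
    ∀ (k : ℕ) (i : Fin n), mulVec (tpow B k) x i ≤ x i := by
  intro k
  induction k with
  | zero =>
    intro i
    refine Finset.sup_le fun j _ => ?_
    by_cases hij : i = j
    · subst hij; simp [tpow, tId]
    · simp [tpow, tId, hij]
  | succ k ih =>
    intro i
    have h0 : 0 < n := i.pos
    rw [show tpow B (k+1) = tmul B (tpow B k) from rfl, mulVec_tmul h0]
    exact le_trans (mulVec_mono ih i) (hx i)

lemma mulVec_kstar_le {x : Fin n → WithBot ℝ} (hx : ∀ i, mulVec B x i ≤ x i) (i : Fin n) :
    mulVec (kstar B) x i ≤ x i := by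
  have h0 : 0 < n := i.pos
  have hr : (Finset.range n).Nonempty := ⟨0, Finset.mem_range.mpr h0⟩
  have step : mulVec (kstar B) x i
      = (Finset.range n).sup fun k => mulVec (tpow B k) x i := by
    show (Finset.univ.sup fun j => ((Finset.range n).sup fun k => tpow B k i j) + x j) = _
    calc (Finset.univ.sup fun j => ((Finset.range n).sup fun k => tpow B k i j) + x j)
        = Finset.univ.sup fun j => (Finset.range n).sup fun k => tpow B k i j + x j := by
          refine Finset.sup_congr rfl fun j _ => ?_
          rw [wb_sup_add _ hr]
      _ = (Finset.range n).sup fun k => Finset.univ.sup fun j => tpow B k i j + x j :=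
          Finset.sup_comm _ _ _
  rw [step]
  exact Finset.sup_le fun k _ => mulVec_tpow_le B hx k i

lemma feasible_kstar (hB : TrOp B ≤ 0) (u : Fin n → WithBot ℝ) (i : Fin n) :
    mulVec B (mulVec (kstar B) u) i ≤ mulVec (kstar B) u i := by
  have h0 : 0 < n := i.pos
  rw [← mulVec_tmul h0]
  refine Finset.sup_le fun j _ => ?_
  calc tmul B (kstar B) i j + u j ≤ kstar B i j + u j :=
        add_le_add_left (tmul_kstar_le B hB i j) _
    _ ≤ mulVec (kstar B) u i :=
        Finset.le_sup (f := fun j => kstar B i j + u j) (Finset.mem_univ j)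

end vec

section main

lemma ne_bot_of_le {a b : WithBot ℝ} (h : a ≤ b) (ha : a ≠ ⊥) : b ≠ ⊥ := by
  intro hbb; exact ha (le_bot_iff.mp (hbb ▸ h))


/-- minimization of `x⁻ p ⊕ q⁻ x` subject to `B x ≤ x`. -/
theorem stmt_3 {n : ℕ} (B : Matrix (Fin n) (Fin n) (WithBot ℝ)) (hB : TrOp B ≤ 0)
    (p : Fin n → WithBot ℝ) (hp : ∃ i, p i ≠ ⊥)
    (q : Fin n → WithBot ℝ) (hq : Reg q)
    (θ : WithBot ℝ) (hθ : θ = trt (cdot q (mulVec (kstar B) p)) 2) :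
    IsLeast {v | ∃ x : Fin n → WithBot ℝ, Reg x ∧ (∀ i, mulVec B x i ≤ x i) ∧
        cdot x p ⊔ cdot q x = v} θ ∧
      ∀ x : Fin n → WithBot ℝ, Reg x → (∀ i, mulVec B x i ≤ x i) →
        (cdot x p ⊔ cdot q x = θ ↔
          ∃ u : Fin n → WithBot ℝ, x = mulVec (kstar B) u ∧
            ∀ j, tinv θ + p j ≤ u j ∧
              u j ≤ θ + tinv (Finset.univ.sup fun i => tinv (q i) + kstar B i j)) := by
  obtain ⟨i0, hp0⟩ := hp
  have hn : 0 < n := i0.pos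
  set r : Fin n → WithBot ℝ := fun j => Finset.univ.sup fun i => tinv (q i) + kstar B i j
    with hr_def
  set S : WithBot ℝ := cdot q (mulVec (kstar B) p) with hS_def
  have hS_eq : S = Finset.univ.sup fun j => r j + p j := cdot_mulVec hn q (kstar B) p
  -- r j is real
  have hr_ne : ∀ j, r j ≠ ⊥ := by
    intro j
    have h2 : tinv (q j) + 0 ≤ tinv (q j) + kstar B j j :=
      add_le_add_right (kstar_diag_nonneg B j) _
    rw [add_zero] at h2
    have h1 : tinv (q j) + kstar B j j ≤ r j :=
      Finset.le_sup (f := fun i => tinv (q i) + kstar B i j) (Finset.mem_univ j)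
    exact ne_bot_of_le (le_trans h2 h1) (tinv_ne_bot (hq j))
  -- S is real
  have hS_ne : S ≠ ⊥ := by
    have h1 : r i0 + p i0 ≤ S := by
      rw [hS_eq]; exact Finset.le_sup (f := fun j => r j + p j) (Finset.mem_univ i0)
    exact ne_bot_of_le h1 (WithBot.add_ne_bot.mpr ⟨hr_ne i0, hp0⟩)
  obtain ⟨s, hs⟩ := WithBot.ne_bot_iff_exists.mp hS_ne
  have hθt : θ = ((s / 2 : ℝ) : WithBot ℝ) := by
    rw [hθ, ← hs]
    show WithBot.map _ _ = _
    simp [trt]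
  set t : ℝ := s / 2 with ht_def
  have htt : t + t = s := by rw [ht_def]; ring
  -- lower bound
  have LB : ∀ x : Fin n → WithBot ℝ, Reg x → (∀ i, mulVec B x i ≤ x i) →
      θ ≤ cdot x p ⊔ cdot q x := by
    intro x hreg hfeas
    have hple : ∀ j, p j ≤ x j + cdot x p := by
      intro j
      obtain ⟨xr, hxr⟩ := WithBot.ne_bot_iff_exists.mp (hreg j)
      have h1 : tinv (x j) + p j ≤ cdot x p :=
        Finset.le_sup (f := fun i => tinv (x i) + p i) (Finset.mem_univ j)
      have h2 : p j = x j + (tinv (x j) + p j) := by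
        rw [← hxr]
        cases p j with
        | bot => simp [tinv]
        | coe c =>
          rw [tinv_coe, ← WithBot.coe_add, ← WithBot.coe_add]
          norm_num
      calc p j = x j + (tinv (x j) + p j) := h2
        _ ≤ x j + cdot x p := add_le_add_right h1 _
    have hS_le : S ≤ cdot q x + cdot x p := by
      calc S ≤ cdot q (mulVec (kstar B) (fun j => x j + cdot x p)) := by
            rw [hS_def]
            exact cdot_mono fun i => mulVec_mono hple i
        _ = cdot q (fun i => mulVec (kstar B) x i + cdot x p) := by
            congr 1
            funext i
            exact mulVec_add_const hn _ _ _ i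
        _ = cdot q (mulVec (kstar B) x) + cdot x p := cdot_add_const hn _ _ _
        _ ≤ cdot q x + cdot x p :=
            add_le_add_left (cdot_mono fun i => mulVec_kstar_le B hfeas i) _
    set M : WithBot ℝ := cdot x p ⊔ cdot q x with hM_def
    have hMM : S ≤ M + M := by
      refine le_trans hS_le (add_le_add ?_ ?_)
      · exact le_sup_right
      · exact le_sup_left
    cases hM : M with
    | bot =>
      exfalso
      rw [hM] at hMM
      simp only [WithBot.add_bot, le_bot_iff] at hMM
      exact hS_ne (hs ▸ hMM)
    | coe m =>
      rw [hθt]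
      rw [hM] at hMM
      rw [← hs, ← WithBot.coe_add] at hMM
      have : s ≤ m + m := WithBot.coe_le_coe.mp hMM
      exact WithBot.coe_le_coe.mpr (by linarith [htt])
  -- value bound for x = kstar B * u with u in the box
  have UB : ∀ (x u : Fin n → WithBot ℝ), Reg x → x = mulVec (kstar B) u →
      (∀ j, tinv θ + p j ≤ u j ∧ u j ≤ θ + tinv (r j)) →
      cdot x p ≤ θ ∧ cdot q x ≤ θ := by
    intro x u hreg hxu hbox
    constructor
    · refine Finset.sup_le fun j _ => ?_
      obtain ⟨xr, hxr⟩ := WithBot.ne_bot_iff_exists.mp (hreg j)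
      cases hpj : p j with
      | bot => simp [← hxr, tinv_coe, ← WithBot.coe_add]
      | coe c =>
        have hxj : tinv θ + p j ≤ x j := by
          rw [hxu]
          exact le_trans (hbox j).1 (le_mulVec_kstar B u j)
        rw [hθt, hpj, ← hxr, tinv_coe, ← WithBot.coe_add] at hxj
        have h3 : -(s/2) + c ≤ xr := WithBot.coe_le_coe.mp hxj
        rw [← hxr, tinv_coe, ← WithBot.coe_add, hθt]
        exact WithBot.coe_le_coe.mpr (by linarith)
    · rw [hxu, cdot_mulVec hn]
      refine Finset.sup_le fun j _ => ?_
      show r j + u j ≤ θ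
      obtain ⟨ρ, hρ⟩ := WithBot.ne_bot_iff_exists.mp (hr_ne j)
      calc r j + u j ≤ r j + (θ + tinv (r j)) := add_le_add_right (hbox j).2 _
        _ = θ := by
          rw [← hρ, hθt, tinv_coe, ← WithBot.coe_add, ← WithBot.coe_add]
          norm_num
  -- the optimal solution x₀
  set u0 : Fin n → WithBot ℝ := fun j => θ + tinv (r j) with hu0_def
  set x0 : Fin n → WithBot ℝ := mulVec (kstar B) u0 with hx0_def
  have hu0_ne : ∀ j, u0 j ≠ ⊥ := by
    intro j
    obtain ⟨ρ, hρ⟩ := WithBot.ne_bot_iff_exists.mp (hr_ne j)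
    rw [hu0_def]
    simp only [← hρ, hθt, tinv_coe, ← WithBot.coe_add]
    exact WithBot.coe_ne_bot
  have hx0_reg : Reg x0 := by
    intro j
    exact ne_bot_of_le (le_mulVec_kstar B u0 j) (hu0_ne j)
  have hx0_feas : ∀ i, mulVec B x0 i ≤ x0 i := fun i => feasible_kstar B hB u0 i
  have hbox0 : ∀ j, tinv θ + p j ≤ u0 j ∧ u0 j ≤ θ + tinv (r j) := by
    intro j
    refine ⟨?_, le_rfl⟩
    obtain ⟨ρ, hρ⟩ := WithBot.ne_bot_iff_exists.mp (hr_ne j)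
    cases hpj : p j with
    | bot => simp [hθt, tinv_coe, ← WithBot.coe_add]
    | coe c =>
      have h1 : r j + p j ≤ S := by
        rw [hS_eq]; exact Finset.le_sup (f := fun j => r j + p j) (Finset.mem_univ j)
      rw [hpj, ← hρ, ← hs, ← WithBot.coe_add] at h1
      have h2 : ρ + c ≤ s := WithBot.coe_le_coe.mp h1
      show tinv θ + (c : WithBot ℝ) ≤ θ + tinv (r j)
      rw [hθt, ← hρ, tinv_coe, tinv_coe, ← WithBot.coe_add, ← WithBot.coe_add]
      exact WithBot.coe_le_coe.mpr (by linarith)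
  have hx0_val : cdot x0 p ⊔ cdot q x0 = θ := by
    obtain ⟨h1, h2⟩ := UB x0 u0 hx0_reg rfl hbox0
    exact le_antisymm (sup_le h1 h2) (LB x0 hx0_reg hx0_feas)
  constructor
  · constructor
    · exact ⟨x0, hx0_reg, hx0_feas, hx0_val⟩
    · rintro v ⟨x, hreg, hfeas, rfl⟩
      exact LB x hreg hfeas
  · intro x hreg hfeas
    constructor
    · intro hval
      have hxfix : x = mulVec (kstar B) x := by
        funext i
        exact le_antisymm (le_mulVec_kstar B x i) (mulVec_kstar_le B hfeas i)
      refine ⟨x, hxfix, fun j => ⟨?_, ?_⟩⟩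
      · obtain ⟨xr, hxr⟩ := WithBot.ne_bot_iff_exists.mp (hreg j)
        cases hpj : p j with
        | bot => simp [hθt, tinv_coe, ← WithBot.coe_add]
        | coe c =>
          have h1 : tinv (x j) + p j ≤ θ := by
            refine le_trans (le_trans ?_ le_sup_left) (le_of_eq hval)
            exact Finset.le_sup (f := fun i => tinv (x i) + p i) (Finset.mem_univ j)
          rw [hpj, ← hxr, tinv_coe, ← WithBot.coe_add, hθt] at h1
          have h2 : -xr + c ≤ s/2 := WithBot.coe_le_coe.mp h1
          rw [hθt, tinv_coe, ← WithBot.coe_add, ← hxr]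
          exact WithBot.coe_le_coe.mpr (by linarith)
      · obtain ⟨xr, hxr⟩ := WithBot.ne_bot_iff_exists.mp (hreg j)
        obtain ⟨ρ, hρ⟩ := WithBot.ne_bot_iff_exists.mp (hr_ne j)
        have h1 : r j + x j ≤ θ := by
          have h2 : r j + x j ≤ cdot q (mulVec (kstar B) x) := by
            rw [cdot_mulVec hn]
            exact Finset.le_sup
              (f := fun j => (Finset.univ.sup fun i => tinv (q i) + kstar B i j) + x j)
              (Finset.mem_univ j)
          rw [← hxfix] at h2
          exact le_trans h2 (le_trans le_sup_right (le_of_eq hval))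
        rw [← hρ, ← hxr, ← WithBot.coe_add, hθt] at h1
        have h2 : ρ + xr ≤ s/2 := WithBot.coe_le_coe.mp h1
        show x j ≤ θ + tinv (r j)
        rw [← hxr, hθt, ← hρ, tinv_coe, ← WithBot.coe_add]
        exact WithBot.coe_le_coe.mpr (by linarith)
    · rintro ⟨u, hxu, hbox⟩
      obtain ⟨h1, h2⟩ := UB x u hreg hxu fun j => (hbox j)
      exact le_antisymm (sup_le h1 h2) (LB x hreg hfeas)
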